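/- For the 1-dimensional convolution μ(a, b) = (a₀b₀, a₁b₀, a₂b₀ + a₀b₁, a₁b₁, a₂b₁) with a ∈ ℝ³, b ∈ ℝ², every point v = μ(a,b) in the image satisfies v₀v₃² + v₁²v₄ − v₁v₂v₃ = 0 and v₂² − 4v₀v₄ ≥ 0. -/
import Mathlib

/-- The 2-layer convolution parametrization map with filter sizes (3,2) and strides (2,1). -/
def conv21 (a : Fin 3 → ℝ) (b : Fin 2 → ℝ) : Fin 5 → ℝ :=
  ![a 0 * b 0, a 1 * b 0, a 2 * b 0 + a 0 * b 1, a 1 * b 1, a 2 * b 1]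

/-- Every point v = μ(a,b) of the image satisfies
v₀v₃² + v₁²v₄ − v₁v₂v₃ = 0 and v₂² − 4v₀v₄ ≥ 0. -/
theorem stmt_6 (a : Fin 3 → ℝ) (b : Fin 2 → ℝ) (v : Fin 5 → ℝ) (hv : v = conv21 a b) :
    v 0 * (v 3) ^ 2 + (v 1) ^ 2 * v 4 - v 1 * v 2 * v 3 = 0 ∧
    (v 2) ^ 2 - 4 * v 0 * v 4 ≥ 0 := by
  subst hv
  simp only [conv21, show (2:Fin 5) = (0:Fin 3).succ.succ from rfl,
    show (3:Fin 5) = (0:Fin 2).succ.succ.succ from rfl,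
    show (4:Fin 5) = (0:Fin 1).succ.succ.succ.succ from rfl,
    Matrix.cons_val_zero, Matrix.cons_val_one, Matrix.head_cons, Matrix.cons_val_succ]
  constructor
  · ring
  · nlinarith [sq_nonneg (a 2 * b 0 - a 0 * b 1)]
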